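/- The function Q(x) = 4/(1+x^2) satisfies the soliton profile equation -H(Q')(x) + Q(x) - (1/2)Q(x)^2 = 0 for all x ∈ ℝ. -/

import Mathlib

open MeasureTheory Real Filter Topology Set

/-- The soliton profile. -/
noncomputable def Q (x : ℝ) : ℝ := 4 / (1 + x ^ 2)

/-- The Hilbert transform, `Hf(x) = -(1/π) p.v. ∫ f(y)/(x-y) dy`. -/
noncomputable def hilbertT (f : ℝ → ℝ) (x : ℝ) : ℝ :=
  -(1 / Real.pi) * limUnder (nhdsWithin 0 (Set.Ioi 0))
    (fun ε : ℝ => ∫ y in {y : ℝ | ε ≤ |x - y|}, f y / (x - y))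

lemma hasDerivAt_Q (y : ℝ) : HasDerivAt Q (-8 * y / (1 + y ^ 2) ^ 2) y := by
  have h1 : HasDerivAt (fun y : ℝ => 1 + y ^ 2) (2 * y) y := by
    simpa using ((hasDerivAt_pow 2 y).const_add 1)
  have h2 := (h1.inv (by positivity : (1:ℝ) + y ^ 2 ≠ 0)).const_mul (4 : ℝ)
  have he : (fun y : ℝ => 4 * (1 + y ^ 2)⁻¹) = Q := by
    funext z; simp [Q, div_eq_mul_inv]
  change HasDerivAt (fun y : ℝ => 4 * (1 + y ^ 2)⁻¹) _ y at h2
  rw [he] at h2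
  convert h2 using 1
  field_simp
  ring

lemma derivQ (y : ℝ) : deriv Q y = -8 * y / (1 + y ^ 2) ^ 2 := (hasDerivAt_Q y).deriv

noncomputable def Af (c : ℝ) : ℝ := 8 * c / (1 + c ^ 2) ^ 2

noncomputable def Pf (c y : ℝ) : ℝ :=
  -(Af c * c) * Real.arctan y + Af c * (1 + c ^ 2) / (2 * (1 + y ^ 2))
    + 4 / (1 + c ^ 2) * (Real.arctan y + y / (1 + y ^ 2))

noncomputable def Rf (c y : ℝ) : ℝ := -(Af c / 2) * Real.log (1 + y ^ 2) + Pf c y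

noncomputable def Gf (c y : ℝ) : ℝ := Af c * Real.log (y - c) + Rf c y

noncomputable def Lc (c : ℝ) : ℝ := Real.pi / 2 * (4 / (1 + c ^ 2) - Af c * c)

lemma hasDerivAt_Gf (c y : ℝ) (hy : y ≠ c) : HasDerivAt (Gf c) (deriv Q y / (c - y)) y := by
  have h1 : HasDerivAt (fun y : ℝ => 1 + y ^ 2) (2 * y) y := by
    simpa using ((hasDerivAt_pow 2 y).const_add 1)
  have hne : (1 : ℝ) + y ^ 2 ≠ 0 := by positivity
  have hlog1 : HasDerivAt (fun y : ℝ => Real.log (y - c)) (1 / (y - c)) y := by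
    simpa using (((hasDerivAt_id y).sub_const c).log (sub_ne_zero.2 hy))
  have hlog2 : HasDerivAt (fun y : ℝ => Real.log (1 + y ^ 2)) (2 * y / (1 + y ^ 2)) y :=
    h1.log hne
  have hat : HasDerivAt Real.arctan (1 / (1 + y ^ 2)) y := Real.hasDerivAt_arctan y
  have hinv : HasDerivAt (fun y : ℝ => (1 + y ^ 2)⁻¹) (-(2 * y) / (1 + y ^ 2) ^ 2) y :=
    h1.inv hne
  have hdiv : HasDerivAt (fun y : ℝ => y / (1 + y ^ 2))
      ((1 * (1 + y ^ 2) - y * (2 * y)) / (1 + y ^ 2) ^ 2) y :=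
    (hasDerivAt_id y).div h1 hne
  have H : HasDerivAt (Gf c)
      (Af c * (1 / (y - c)) + (-(Af c / 2) * (2 * y / (1 + y ^ 2))
        + (-(Af c * c) * (1 / (1 + y ^ 2))
        + Af c * (1 + c ^ 2) / 2 * (-(2 * y) / (1 + y ^ 2) ^ 2)
        + 4 / (1 + c ^ 2) * (1 / (1 + y ^ 2)
          + (1 * (1 + y ^ 2) - y * (2 * y)) / (1 + y ^ 2) ^ 2)))) y := by
    unfold Gf Rf Pf
    have heq : ∀ z : ℝ, Af c * (1 + c ^ 2) / (2 * (1 + z ^ 2)) =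
        Af c * (1 + c ^ 2) / 2 * (1 + z ^ 2)⁻¹ := by
      intro z; field_simp
    simp_rw [heq]
    exact ((hlog1.const_mul (Af c)).add
      ((hlog2.const_mul (-(Af c / 2))).add
        (((hat.const_mul (-(Af c * c))).add
          (hinv.const_mul (Af c * (1 + c ^ 2) / 2))).add
          ((hat.add hdiv).const_mul (4 / (1 + c ^ 2))))))
  convert H using 1
  rw [derivQ]
  have hcy : c - y ≠ 0 := sub_ne_zero.2 (Ne.symm hy)
  have hyc : y - c ≠ 0 := sub_ne_zero.2 hy
  have hc : (1 : ℝ) + c ^ 2 ≠ 0 := by positivity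
  unfold Af
  field_simp
  ring

lemma lin_top (a b : ℝ) : Tendsto (fun y : ℝ => (a * y + b) / (1 + y ^ 2)) atTop (𝓝 0) := by
  have h1 : Tendsto (fun y : ℝ => (a + b / y) / (1 / y + y)) atTop (𝓝 0) := by
    apply Tendsto.div_atTop
    · simpa using (tendsto_const_nhds (x := a)).add
        ((tendsto_const_nhds (x := b)).div_atTop tendsto_id)
    · exact ((tendsto_const_nhds (x := (1:ℝ))).div_atTop tendsto_id).add_atTop tendsto_id
  apply h1.congr'
  filter_upwards [eventually_gt_atTop (0 : ℝ)] with y hy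
  have h2 : (1 : ℝ) + y ^ 2 ≠ 0 := by positivity
  have hy0 : y ≠ 0 := ne_of_gt hy
  rw [div_eq_div_iff (by positivity) h2]
  field_simp

lemma lin_bot (a b : ℝ) : Tendsto (fun y : ℝ => (a * y + b) / (1 + y ^ 2)) atBot (𝓝 0) := by
  have h := (lin_top (-a) b).comp tendsto_neg_atBot_atTop
  apply h.congr
  intro y
  simp only [Function.comp]
  ring_nf

lemma ratio_eq (c y : ℝ) :
    (y - c) ^ 2 / (1 + y ^ 2) = 1 + ((-2 * c) * y + (c ^ 2 - 1)) / (1 + y ^ 2) := by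
  have h2 : (1 : ℝ) + y ^ 2 ≠ 0 := by positivity
  field_simp
  ring

lemma ratio_top (c : ℝ) : Tendsto (fun y : ℝ => (y - c) ^ 2 / (1 + y ^ 2)) atTop (𝓝 1) := by
  simp_rw [ratio_eq c]
  simpa using (tendsto_const_nhds (x := (1:ℝ))).add (lin_top (-2 * c) (c ^ 2 - 1))

lemma ratio_bot (c : ℝ) : Tendsto (fun y : ℝ => (y - c) ^ 2 / (1 + y ^ 2)) atBot (𝓝 1) := by
  simp_rw [ratio_eq c]
  simpa using (tendsto_const_nhds (x := (1:ℝ))).add (lin_bot (-2 * c) (c ^ 2 - 1))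

lemma arctan_top : Tendsto Real.arctan atTop (𝓝 (Real.pi / 2)) :=
  Real.tendsto_arctan_atTop.mono_right nhdsWithin_le_nhds

lemma arctan_bot : Tendsto Real.arctan atBot (𝓝 (-(Real.pi / 2))) :=
  Real.tendsto_arctan_atBot.mono_right nhdsWithin_le_nhds

lemma Pf_top (c : ℝ) : Tendsto (Pf c) atTop (𝓝 (Lc c)) := by
  have hinv : Tendsto (fun y : ℝ => Af c * (1 + c ^ 2) / (2 * (1 + y ^ 2))) atTop (𝓝 0) := by
    have := lin_top 0 (Af c * (1 + c ^ 2) / 2)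
    apply this.congr
    intro y
    have h2 : (1 : ℝ) + y ^ 2 ≠ 0 := by positivity
    field_simp
    ring
  have hdiv : Tendsto (fun y : ℝ => y / (1 + y ^ 2)) atTop (𝓝 0) := by
    simpa using lin_top 1 0
  have h := ((arctan_top.const_mul (-(Af c * c))).add hinv).add
    ((arctan_top.add hdiv).const_mul (4 / (1 + c ^ 2)))
  unfold Pf
  convert h using 2
  unfold Lc
  ring

lemma Pf_bot (c : ℝ) : Tendsto (Pf c) atBot (𝓝 (-Lc c)) := by
  have hinv : Tendsto (fun y : ℝ => Af c * (1 + c ^ 2) / (2 * (1 + y ^ 2))) atBot (𝓝 0) := by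
    have := lin_bot 0 (Af c * (1 + c ^ 2) / 2)
    apply this.congr
    intro y
    have h2 : (1 : ℝ) + y ^ 2 ≠ 0 := by positivity
    field_simp
    ring
  have hdiv : Tendsto (fun y : ℝ => y / (1 + y ^ 2)) atBot (𝓝 0) := by
    simpa using lin_bot 1 0
  have h := ((arctan_bot.const_mul (-(Af c * c))).add hinv).add
    ((arctan_bot.add hdiv).const_mul (4 / (1 + c ^ 2)))
  unfold Pf
  convert h using 2
  unfold Lc
  ring

lemma Gf_eq (c y : ℝ) (hy : y ≠ c) :
    Gf c y = Af c / 2 * Real.log ((y - c) ^ 2 / (1 + y ^ 2)) + Pf c y := by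
  have h2 : (1 : ℝ) + y ^ 2 ≠ 0 := by positivity
  unfold Gf Rf
  rw [Real.log_div (pow_ne_zero 2 (sub_ne_zero.2 hy)) h2, Real.log_pow]
  push_cast
  ring

lemma log_ratio_top (c : ℝ) :
    Tendsto (fun y : ℝ => Af c / 2 * Real.log ((y - c) ^ 2 / (1 + y ^ 2))) atTop (𝓝 0) := by
  have h := ((Real.continuousAt_log one_ne_zero).tendsto.comp (ratio_top c)).const_mul (Af c / 2)
  simpa using h

lemma log_ratio_bot (c : ℝ) :
    Tendsto (fun y : ℝ => Af c / 2 * Real.log ((y - c) ^ 2 / (1 + y ^ 2))) atBot (𝓝 0) := by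
  have h := ((Real.continuousAt_log one_ne_zero).tendsto.comp (ratio_bot c)).const_mul (Af c / 2)
  simpa using h

lemma Gf_top (c : ℝ) : Tendsto (Gf c) atTop (𝓝 (Lc c)) := by
  have h := (log_ratio_top c).add (Pf_top c)
  rw [zero_add] at h
  apply h.congr'
  filter_upwards [eventually_gt_atTop c] with y hy
  exact (Gf_eq c y (ne_of_gt hy)).symm

lemma Gf_bot (c : ℝ) : Tendsto (Gf c) atBot (𝓝 (-Lc c)) := by
  have h := (log_ratio_bot c).add (Pf_bot c)
  rw [zero_add] at h
  apply h.congr'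
  filter_upwards [eventually_lt_atBot c] with y hy
  exact (Gf_eq c y (ne_of_lt hy)).symm

lemma integrableOn_S (c ε : ℝ) (hε : 0 < ε) :
    IntegrableOn (fun y => deriv Q y / (c - y)) {y : ℝ | ε ≤ |c - y|} := by
  have hS : MeasurableSet {y : ℝ | ε ≤ |c - y|} :=
    measurableSet_le measurable_const ((measurable_const.sub measurable_id).abs)
  have hbound : Integrable (fun y : ℝ => 8 / ε * (1 + y ^ 2)⁻¹) :=
    integrable_inv_one_add_sq.const_mul _
  refine (hbound.restrict (s := {y : ℝ | ε ≤ |c - y|})).mono ?_ ?_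
  · exact ((measurable_deriv Q).div (measurable_const.sub measurable_id)).aestronglyMeasurable
  · filter_upwards [ae_restrict_mem hS] with y hy
    have ht : (0:ℝ) < 1 + y ^ 2 := by positivity
    have hcy : (0:ℝ) < |c - y| := lt_of_lt_of_le hε hy
    rw [Real.norm_eq_abs, Real.norm_eq_abs, derivQ, abs_div]
    have h1 : |(-8) * y / (1 + y ^ 2) ^ 2| = 8 * |y| / (1 + y ^ 2) ^ 2 := by
      rw [abs_div, abs_mul, abs_of_pos (by positivity : (0:ℝ) < (1 + y ^ 2) ^ 2)]
      norm_num
    rw [h1, abs_of_pos (by positivity : (0:ℝ) < 8 / ε * (1 + y ^ 2)⁻¹)]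
    have h2 : |y| ≤ 1 + y ^ 2 := by nlinarith [abs_nonneg y, sq_abs y]
    calc 8 * |y| / (1 + y ^ 2) ^ 2 / |c - y| ≤ 8 * (1 + y ^ 2) / (1 + y ^ 2) ^ 2 / ε := by
          gcongr
      _ = 8 / ε * (1 + y ^ 2)⁻¹ := by field_simp

lemma S_eq (c ε : ℝ) :
    {y : ℝ | ε ≤ |c - y|} = Set.Iic (c - ε) ∪ Set.Ici (c + ε) := by
  ext y
  simp only [Set.mem_setOf_eq, le_abs, Set.mem_union, Set.mem_Iic, Set.mem_Ici]
  constructor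
  · rintro (h | h)
    · left; linarith
    · right; linarith
  · rintro (h | h)
    · left; linarith
    · right; linarith

lemma integral_S (c ε : ℝ) (hε : 0 < ε) :
    ∫ y in {y : ℝ | ε ≤ |c - y|}, deriv Q y / (c - y)
      = 2 * Lc c + (Rf c (c - ε) - Rf c (c + ε)) := by
  have hint := integrableOn_S c ε hε
  rw [S_eq c ε] at hint ⊢
  have hIic : IntegrableOn (fun y => deriv Q y / (c - y)) (Set.Iic (c - ε)) :=
    hint.mono_set Set.subset_union_left
  have hIci : IntegrableOn (fun y => deriv Q y / (c - y)) (Set.Ici (c + ε)) :=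
    hint.mono_set Set.subset_union_right
  rw [setIntegral_union (Set.Iic_disjoint_Ici.2 (by linarith)) measurableSet_Ici hIic hIci]
  rw [integral_Ici_eq_integral_Ioi]
  rw [integral_Ioi_of_hasDerivAt_of_tendsto'
    (fun y hy => hasDerivAt_Gf c y (by rw [Set.mem_Ici] at hy; intro h; rw [h] at hy; linarith))
    (hIci.mono_set Set.Ioi_subset_Ici_self) (Gf_top c)]
  rw [integral_Iic_of_hasDerivAt_of_tendsto'
    (fun y hy => hasDerivAt_Gf c y (by rw [Set.mem_Iic] at hy; intro h; rw [h] at hy; linarith))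
    hIic (Gf_bot c)]
  unfold Gf
  have e1 : c - ε - c = -ε := by ring
  have e2 : c + ε - c = ε := by ring
  rw [e1, e2, Real.log_neg_eq_log]
  ring

lemma continuous_Rf (c : ℝ) : Continuous (Rf c) := by
  have h1 : Continuous fun y : ℝ => 1 + y ^ 2 := by continuity
  have hne : ∀ y : ℝ, 1 + y ^ 2 ≠ 0 := fun y => by positivity
  unfold Rf Pf
  refine Continuous.add (continuous_const.mul (h1.log hne)) ?_
  refine Continuous.add (Continuous.add (continuous_const.mul Real.continuous_arctan) ?_) ?_
  · exact continuous_const.div (continuous_const.mul h1) (fun y => by positivity)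
  · exact continuous_const.mul (Real.continuous_arctan.add (continuous_id.div h1 hne))

lemma tendsto_integral (c : ℝ) :
    Tendsto (fun ε : ℝ => ∫ y in {y : ℝ | ε ≤ |c - y|}, deriv Q y / (c - y))
      (𝓝[>] 0) (𝓝 (2 * Lc c)) := by
  have hsub : Tendsto (fun ε : ℝ => c - ε) (𝓝[>] (0:ℝ)) (𝓝 c) := by
    have h0 : Tendsto (fun ε : ℝ => c - ε) (𝓝 (0:ℝ)) (𝓝 (c - 0)) :=
      tendsto_const_nhds.sub tendsto_id
    rw [sub_zero] at h0
    exact h0.mono_left nhdsWithin_le_nhds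
  have hadd : Tendsto (fun ε : ℝ => c + ε) (𝓝[>] (0:ℝ)) (𝓝 c) := by
    have h0 : Tendsto (fun ε : ℝ => c + ε) (𝓝 (0:ℝ)) (𝓝 (c + 0)) :=
      tendsto_const_nhds.add tendsto_id
    rw [add_zero] at h0
    exact h0.mono_left nhdsWithin_le_nhds
  have hR := ((continuous_Rf c).tendsto c).comp hsub
  have hR' := ((continuous_Rf c).tendsto c).comp hadd
  have h := (tendsto_const_nhds (x := 2 * Lc c)).add (hR.sub hR')
  rw [sub_self, add_zero] at h
  apply h.congr'
  filter_upwards [self_mem_nhdsWithin] with ε hε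
  exact (integral_S c ε hε).symm

theorem soliton_equation (x : ℝ) : -hilbertT (deriv Q) x + Q x - (1 / 2) * Q x ^ 2 = 0 := by
  have hlim : limUnder (𝓝[>] (0:ℝ))
      (fun ε : ℝ => ∫ y in {y : ℝ | ε ≤ |x - y|}, deriv Q y / (x - y)) = 2 * Lc x :=
    (tendsto_integral x).limUnder_eq
  unfold hilbertT
  rw [hlim]
  unfold Q Lc Af
  have hπ : Real.pi ≠ 0 := Real.pi_ne_zero
  have hx : (1:ℝ) + x ^ 2 ≠ 0 := by positivity
  field_simp
  ring
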